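/- Let F be a real Hilbert space, A ⊆ F a nonempty open convex set, and Φ : F → ℝ twice continuously Fréchet differentiable and strictly convex on A. Then the following are equivalent: (1) d_Φ(f,g) = d_Φ(g,f) for all f, g ∈ A; (2) there exist a bounded self-adjoint strictly positive continuous linear operator T : F → F (meaning ⟨f, Tf⟩ > 0 for all f ≠ 0), an element b ∈ F, and c ∈ ℝ such that Φ(f) = (1/2)⟨f, Tf⟩ + ⟨b, f⟩ + c for all f ∈ A; (3) there exists a bounded self-adjoint strictly positive continuous linear operator T : F → F such that d_Φ(f,g) = (1/2)⟨f − g, T(f − g)⟩ for all f, g ∈ A. -/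

import Mathlib

open scoped RealInnerProductSpace
open Filter

section Aux

variable {F : Type*} [NormedAddCommGroup F] [InnerProductSpace ℝ F] [CompleteSpace F]

lemma aux_hasFDerivAt {A : Set F} (hA : IsOpen A) {Φ : F → ℝ}
    (hsmooth : ContDiffOn ℝ 2 Φ A) {f : F} (hf : f ∈ A) :
    HasFDerivAt Φ (fderiv ℝ Φ f) f :=
  ((hsmooth.differentiableOn (by norm_num)).differentiableAt (hA.mem_nhds hf)).hasFDerivAt

lemma aux_hasFDerivAt2 {A : Set F} (hA : IsOpen A) {Φ : F → ℝ}
    (hsmooth : ContDiffOn ℝ 2 Φ A) {f : F} (hf : f ∈ A) :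
    HasFDerivAt (fderiv ℝ Φ) (fderiv ℝ (fderiv ℝ Φ) f) f := by
  have h1 : ContDiffOn ℝ 1 (fderiv ℝ Φ) A := hsmooth.fderiv_of_isOpen hA (by norm_num)
  exact ((h1.differentiableOn (by norm_num)).differentiableAt (hA.mem_nhds hf)).hasFDerivAt

end Aux

section Aux2
set_option linter.unusedSectionVars false

variable {F : Type*} [NormedAddCommGroup F] [InnerProductSpace ℝ F] [CompleteSpace F]

lemma aux_key {A : Set F} (hA : IsOpen A) {Φ : F → ℝ}
    (hsmooth : ContDiffOn ℝ 2 Φ A)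
    (hsym : ∀ f ∈ A, ∀ g ∈ A, Φ f - Φ g
      = (1/2) * (fderiv ℝ Φ f (f - g) + fderiv ℝ Φ g (f - g))) :
    ∀ f ∈ A, ∀ g ∈ A, ∀ v : F,
      fderiv ℝ Φ f v - fderiv ℝ Φ g v = fderiv ℝ (fderiv ℝ Φ) f v (f - g) := by
  intro f hf g hg v
  set S := fderiv ℝ Φ with hSdef
  have hL : HasFDerivAt (fun x => Φ x - Φ g) (S f) f :=
    (aux_hasFDerivAt hA hsmooth hf).sub_const (Φ g)
  have hxg : HasFDerivAt (fun x : F => x - g) (ContinuousLinearMap.id ℝ F) f :=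
    (hasFDerivAt_id f).sub_const g
  have hSx : HasFDerivAt S (fderiv ℝ S f) f := aux_hasFDerivAt2 hA hsmooth hf
  have hApp : HasFDerivAt (fun x => S x (x - g))
      (((isBoundedBilinearMap_apply (𝕜 := ℝ)).deriv (S f, f - g)).comp
        ((fderiv ℝ S f).prod (ContinuousLinearMap.id ℝ F))) f :=
    by have := ((isBoundedBilinearMap_apply (𝕜 := ℝ)).hasFDerivAt (S f, f - g)).comp f (hSx.prodMk hxg); exact this
  have hB : HasFDerivAt (fun x => S g (x - g))
      ((S g).comp (ContinuousLinearMap.id ℝ F)) f :=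
    (S g).hasFDerivAt.comp f hxg
  have hR : HasFDerivAt (fun x => (1/2 : ℝ) * (S x (x - g) + S g (x - g)))
      ((1/2 : ℝ) • (((isBoundedBilinearMap_apply (𝕜 := ℝ)).deriv (S f, f - g)).comp
        ((fderiv ℝ S f).prod (ContinuousLinearMap.id ℝ F)) +
        (S g).comp (ContinuousLinearMap.id ℝ F))) f :=
    (hApp.add hB).const_mul (1/2)
  have heq : (fun x => Φ x - Φ g) =ᶠ[nhds f]
      (fun x => (1/2 : ℝ) * (S x (x - g) + S g (x - g))) := by
    filter_upwards [hA.mem_nhds hf] with x hx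
    simpa using hsym x hx g hg
  have hfd : S f = (1/2 : ℝ) • (((isBoundedBilinearMap_apply (𝕜 := ℝ)).deriv (S f, f - g)).comp
        ((fderiv ℝ S f).prod (ContinuousLinearMap.id ℝ F)) +
        (S g).comp (ContinuousLinearMap.id ℝ F)) := by
    exact (hL.fderiv).symm.trans (heq.fderiv_eq.trans hR.fderiv)
  have := congrArg (fun L : F →L[ℝ] ℝ => L v) hfd
  simp only [ContinuousLinearMap.smul_apply, ContinuousLinearMap.add_apply,
    ContinuousLinearMap.comp_apply, ContinuousLinearMap.prod_apply,
    ContinuousLinearMap.id_apply, IsBoundedBilinearMap.deriv_apply, smul_eq_mul] at this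
  linarith

end Aux2

noncomputable def rieszOp {F : Type*} [NormedAddCommGroup F] [InnerProductSpace ℝ F]
    [CompleteSpace F] (H : F →L[ℝ] F →L[ℝ] ℝ) : F →L[ℝ] F :=
  LinearMap.mkContinuous
    { toFun := fun x => (InnerProductSpace.toDual ℝ F).symm (H x)
      map_add' := fun x y => by rw [map_add, map_add]
      map_smul' := fun c x => by
        apply ext_inner_right ℝ
        intro y
        rw [InnerProductSpace.toDual_symm_apply]
        simp only [RingHom.id_apply, real_inner_smul_left, map_smul,
          InnerProductSpace.toDual_symm_apply, ContinuousLinearMap.smul_apply, smul_eq_mul] }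
    ‖H‖ (fun x => by
      simp only [LinearMap.coe_mk, AddHom.coe_mk, LinearIsometryEquiv.norm_map]
      exact H.le_opNorm x)

lemma rieszOp_inner {F : Type*} [NormedAddCommGroup F] [InnerProductSpace ℝ F]
    [CompleteSpace F] (H : F →L[ℝ] F →L[ℝ] ℝ) (x y : F) :
    ⟪rieszOp H x, y⟫ = H x y := by
  simp only [rieszOp, LinearMap.mkContinuous_apply, LinearMap.coe_mk, AddHom.coe_mk,
    InnerProductSpace.toDual_symm_apply]
set_option maxHeartbeats 1000000 in
/-- Characterisation of symmetric functional Bregman divergences: for `Φ` twice continuously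
Fréchet differentiable and strictly convex on a nonempty open convex subset `A` of a real
Hilbert space, with `d_Φ(f,g) = Φ(f) − Φ(g) − DΦ(g)(f − g)`, the following are equivalent:
(1) `d_Φ` is symmetric on `A`; (2) `Φ` is a quadratic `Φ(f) = ½⟪f,Tf⟫ + ⟪b,f⟫ + c` on `A`
for some bounded self-adjoint strictly positive operator `T`, `b ∈ F`, `c ∈ ℝ`;
(3) `d_Φ(f,g) = ½⟪f−g, T(f−g)⟫` on `A` for such a `T`. -/
theorem bregman_symmetric_tfae
    {F : Type*} [NormedAddCommGroup F] [InnerProductSpace ℝ F] [CompleteSpace F]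
    (A : Set F) (hA : IsOpen A) (hAconv : Convex ℝ A) (hAne : A.Nonempty)
    (Φ : F → ℝ)
    (hsmooth : ContDiffOn ℝ 2 Φ A)
    (hconv : StrictConvexOn ℝ A Φ) :
    List.TFAE
      [ ∀ f ∈ A, ∀ g ∈ A,
          Φ f - Φ g - fderiv ℝ Φ g (f - g) = Φ g - Φ f - fderiv ℝ Φ f (g - f),
        ∃ T : F →L[ℝ] F, (∀ x y : F, ⟪T x, y⟫ = ⟪x, T y⟫) ∧
          (∀ x : F, x ≠ 0 → 0 < ⟪x, T x⟫) ∧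
          ∃ b : F, ∃ c : ℝ, ∀ f ∈ A, Φ f = (1/2) * ⟪f, T f⟫ + ⟪b, f⟫ + c,
        ∃ T : F →L[ℝ] F, (∀ x y : F, ⟪T x, y⟫ = ⟪x, T y⟫) ∧
          (∀ x : F, x ≠ 0 → 0 < ⟪x, T x⟫) ∧
          ∀ f ∈ A, ∀ g ∈ A,
            Φ f - Φ g - fderiv ℝ Φ g (f - g) = (1/2) * ⟪f - g, T (f - g)⟫ ] := by
  tfae_have 1 → 2 := by
    intro h1
    obtain ⟨g₀, hg₀⟩ := hAne
    set S := fderiv ℝ Φ with hSdef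
    set H := fderiv ℝ S g₀ with hHdef
    have hsym : ∀ f ∈ A, ∀ g ∈ A, Φ f - Φ g = (1/2) * (S f (f - g) + S g (f - g)) := by
      intro f hf g hg
      have h := h1 f hf g hg
      have h2 : S f (g - f) = -(S f (f - g)) := by rw [← neg_sub f g, map_neg]
      rw [h2] at h; linarith
    have key := aux_key hA hsmooth hsym
    have key' : ∀ f ∈ A, ∀ g ∈ A, ∀ v : F, S f v - S g v = fderiv ℝ S g v (f - g) := by
      intro f hf g hg v
      have hk := key g hg f hf v
      have h2 : fderiv ℝ S g v (g - f) = -(fderiv ℝ S g v (f - g)) := by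
        rw [← neg_sub f g, map_neg]
      rw [h2] at hk; linarith
    have hHsym : ∀ v w : F, H v w = H w v := by
      intro v w
      exact second_derivative_symmetric_of_eventually_of_real
        (f := Φ) (f' := S)
        (by filter_upwards [hA.mem_nhds hg₀] with y hy using aux_hasFDerivAt hA hsmooth hy)
        (aux_hasFDerivAt2 hA hsmooth hg₀) v w
    have hquad : ∀ f ∈ A, Φ f = Φ g₀ + S g₀ (f - g₀) + (1/2) * H (f - g₀) (f - g₀) := by
      intro f hf
      have e1 := hsym f hf g₀ hg₀
      have e2 := key' f hf g₀ hg₀ (f - g₀)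
      linarith
    refine ⟨rieszOp H, ?_, ?_, ?_⟩
    · intro x y
      rw [rieszOp_inner, real_inner_comm (rieszOp H y) x, rieszOp_inner]
      exact hHsym x y
    · intro x hx
      obtain ⟨r, hr, hball⟩ := Metric.isOpen_iff.1 hA g₀ hg₀
      set ε : ℝ := r / (2 * ‖x‖) with hεdef
      have hxn : 0 < ‖x‖ := norm_pos_iff.2 hx
      have hε : 0 < ε := div_pos hr (by positivity)
      set u : F := ε • x with hudef
      have hun : ‖u‖ = r / 2 := by
        rw [hudef, norm_smul, Real.norm_eq_abs, abs_of_pos hε, hεdef]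
        field_simp
      have h1 : g₀ + u ∈ A := by
        apply hball; rw [Metric.mem_ball, dist_eq_norm, add_sub_cancel_left, hun]; linarith
      have h2 : g₀ + (1/2 : ℝ) • u ∈ A := by
        apply hball; rw [Metric.mem_ball, dist_eq_norm, add_sub_cancel_left, norm_smul, hun]
        rw [Real.norm_eq_abs, abs_of_pos (by norm_num : (0:ℝ) < 1/2)]
        linarith
      have hune : u ≠ 0 := smul_ne_zero hε.ne' hx
      have hne : g₀ + u ≠ g₀ := by
        intro hcon
        exact hune (by rwa [add_eq_left] at hcon)
      have hsc := hconv.2 h1 hg₀ hne (by norm_num : (0:ℝ) < 1/2)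
        (by norm_num : (0:ℝ) < 1/2) (by norm_num)
      have hmid : (1/2:ℝ) • (g₀ + u) + (1/2:ℝ) • g₀ = g₀ + (1/2:ℝ) • u := by module
      rw [hmid] at hsc
      have q1 := hquad (g₀ + u) h1
      have q2 := hquad (g₀ + (1/2:ℝ) • u) h2
      simp only [add_sub_cancel_left, map_smul, ContinuousLinearMap.smul_apply,
        smul_eq_mul] at q1 q2 hsc
      rw [q1, q2] at hsc
      have hHu : 0 < H u u := by linarith
      rw [hudef] at hHu
      simp only [map_smul, ContinuousLinearMap.smul_apply, smul_eq_mul] at hHu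
      have hxx : 0 < H x x := by nlinarith [mul_pos hε hε]
      rw [real_inner_comm (rieszOp H x) x, rieszOp_inner]
      exact hxx
    · refine ⟨(InnerProductSpace.toDual ℝ F).symm (S g₀) - rieszOp H g₀,
        Φ g₀ - S g₀ g₀ + (1/2) * H g₀ g₀, ?_⟩
      intro f hf
      have hq := hquad f hf
      have hb : ⟪(InnerProductSpace.toDual ℝ F).symm (S g₀) - rieszOp H g₀, f⟫
          = S g₀ f - H g₀ f := by
        rw [inner_sub_left, InnerProductSpace.toDual_symm_apply, rieszOp_inner]
      rw [hb, real_inner_comm (rieszOp H f) f, rieszOp_inner]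
      have hexp : H (f - g₀) (f - g₀) = H f f - H f g₀ - H g₀ f + H g₀ g₀ := by
        simp only [map_sub, ContinuousLinearMap.sub_apply]; ring
      have hS : S g₀ (f - g₀) = S g₀ f - S g₀ g₀ := map_sub _ _ _
      have hsymfg := hHsym f g₀
      linarith
  tfae_have 2 → 3 := by
    rintro ⟨T, hTsym, hTpos, b, c, hquad⟩
    refine ⟨T, hTsym, hTpos, ?_⟩
    intro f hf g hg
    -- derivative of the quadratic at g
    set Q : F → ℝ := fun f => (1/2) * ⟪f, T f⟫ + ⟪b, f⟫ + c with hQdef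
    have hQd : HasFDerivAt Q
        ((1/2 : ℝ) • ((fderivInnerCLM ℝ ((g : F), T g)).comp
          ((ContinuousLinearMap.id ℝ F).prod T)) + (innerSL ℝ b)) g := by
      have h1 : HasFDerivAt (fun f : F => ⟪f, T f⟫)
          ((fderivInnerCLM ℝ ((g : F), T g)).comp ((ContinuousLinearMap.id ℝ F).prod T)) g :=
        HasFDerivAt.inner (𝕜 := ℝ) (hasFDerivAt_id g) (T.hasFDerivAt)
      have h2 : HasFDerivAt (fun f : F => ⟪b, f⟫ + c) (innerSL ℝ b) g :=
        ((innerSL ℝ b).hasFDerivAt).add_const c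
      have := (h1.const_mul (1/2 : ℝ)).add h2
      convert this using 2 with x
      · rfl
      · funext x; simp only [hQdef, Pi.add_apply]; ring
    have hfd : fderiv ℝ Φ g = (1/2 : ℝ) • ((fderivInnerCLM ℝ ((g : F), T g)).comp
          ((ContinuousLinearMap.id ℝ F).prod T)) + (innerSL ℝ b) := by
      have heq : Φ =ᶠ[nhds g] Q := by
        filter_upwards [hA.mem_nhds hg] with x hx using hquad x hx
      rw [heq.fderiv_eq, hQd.fderiv]
    have hval : fderiv ℝ Φ g (f - g)
        = (1/2) * (⟪g, T (f - g)⟫ + ⟪f - g, T g⟫) + ⟪b, f - g⟫ := by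
      rw [hfd]
      simp [smul_eq_mul]
    have e1 : ⟪f, T g⟫ = ⟪g, T f⟫ := by
      rw [← hTsym f g, real_inner_comm]
    rw [hquad f hf, hquad g hg, hval]
    simp only [inner_sub_left, inner_sub_right, map_sub]
    linarith [e1]
  tfae_have 3 → 1 := by
    rintro ⟨T, hTsym, hTpos, h⟩
    intro f hf g hg
    rw [h f hf g hg, h g hg f hf, ← neg_sub f g, map_neg, inner_neg_neg]
  tfae_finish
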